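/- arXiv:1807.02765 — 3 statements merged into one kernel-verified Lean document; each statement's English description precedes it below -/
import Mathlib

section
/- For 0 < a < 1, the integral of f_K(x;a) over the interval (-a, a) equals 1, i.e., ∫_{-a}^{a} sqrt(1-a^2) / (π (1-x^2) sqrt(a^2-x^2)) dx = 1. -/
noncomputable def fK (x a : ℝ) : ℝ :=
  Real.sqrt (1 - a^2) / (Real.pi * (1 - x^2) * Real.sqrt (a^2 - x^2))

private lemma konno_deriv (a x : ℝ) (ha0 : 0 < a) (ha1 : a < 1) (hx : x ∈ Set.Ioo (-a) a) :
    HasDerivAt (fun y => Real.arcsin (Real.sqrt (1 - a^2) * y / (a * Real.sqrt (1 - y^2))) / Real.pi)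
      (fK x a) x := by
  have hx2 : x^2 < a^2 := by nlinarith [hx.1, hx.2]
  have ht : (0:ℝ) < 1 - x^2 := by nlinarith
  have hu : (0:ℝ) < a^2 - x^2 := by linarith
  have ha2 : (0:ℝ) < 1 - a^2 := by nlinarith
  have hpi := Real.pi_pos
  have ht2 : Real.sqrt (1 - x^2) ^ 2 = 1 - x^2 := Real.sq_sqrt ht.le
  have hu2 : Real.sqrt (a^2 - x^2) ^ 2 = a^2 - x^2 := Real.sq_sqrt hu.le
  have hs2 : Real.sqrt (1 - a^2) ^ 2 = 1 - a^2 := Real.sq_sqrt ha2.le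
  have htpos : 0 < Real.sqrt (1 - x^2) := Real.sqrt_pos.2 ht
  have hupos : 0 < Real.sqrt (a^2 - x^2) := Real.sqrt_pos.2 hu
  have hspos : 0 < Real.sqrt (1 - a^2) := Real.sqrt_pos.2 ha2
  have h1 : HasDerivAt (fun y : ℝ => 1 - y^2) (-(2*x)) x := by
    simpa using ((hasDerivAt_pow 2 x).const_sub 1)
  have h2 : HasDerivAt (fun y : ℝ => Real.sqrt (1 - y^2))
      (1/(2*Real.sqrt (1-x^2)) * (-(2*x))) x :=
    (Real.hasDerivAt_sqrt ht.ne').comp x h1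
  have hden : HasDerivAt (fun y : ℝ => a * Real.sqrt (1 - y^2))
      (a * (1/(2*Real.sqrt (1-x^2)) * (-(2*x)))) x := h2.const_mul a
  have hnum : HasDerivAt (fun y : ℝ => Real.sqrt (1 - a^2) * y) (Real.sqrt (1-a^2) * 1) x :=
    (hasDerivAt_id x).const_mul _
  have hdne : a * Real.sqrt (1-x^2) ≠ 0 := by positivity
  have hv := hnum.div hden hdne
  set v := Real.sqrt (1 - a^2) * x / (a * Real.sqrt (1 - x^2)) with hvdef
  have hvsq : v^2 < 1 := by
    rw [hvdef, div_pow, div_lt_one (by positivity), mul_pow, mul_pow, ht2, hs2]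
    nlinarith
  have hvabs : |v| < 1 := (sq_lt_one_iff_abs_lt_one v).1 hvsq
  have hv1 : v ≠ 1 := fun h => by simp [h] at hvabs
  have hvm1 : v ≠ -1 := fun h => by simp [h] at hvabs
  have harc := (Real.hasDerivAt_arcsin hvm1 hv1).comp x hv
  have hF := harc.div_const Real.pi
  convert hF using 1
  · rfl
  · rfl
  · rfl
  have hsq : Real.sqrt (1 - v^2) = Real.sqrt (a^2-x^2) / (a * Real.sqrt (1-x^2)) := by
    rw [show 1 - v^2 = (Real.sqrt (a^2-x^2) / (a * Real.sqrt (1-x^2)))^2 by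
      rw [hvdef, div_pow, div_pow, mul_pow, mul_pow, ht2, hu2, hs2]
      field_simp
      ring]
    exact Real.sqrt_sq (by positivity)
  rw [hsq]
  unfold fK
  field_simp
  linear_combination (x^2) * ht2

private lemma konno_integrable (a : ℝ) (ha0 : 0 < a) (ha1 : a < 1) :
    IntervalIntegrable (fun x => fK x a) MeasureTheory.volume (-a) a := by
  have ha2 : (0:ℝ) < 1 - a^2 := by nlinarith
  have hpi := Real.pi_pos
  set C : ℝ := Real.sqrt (1 - a^2) / (Real.pi * (1 - a^2) * Real.sqrt a) with hC
  have hCpos : 0 < C := by positivity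
  have hg1 : IntervalIntegrable (fun x => (a - x) ^ (-(1/2):ℝ)) MeasureTheory.volume (-a) a := by
    have := (intervalIntegral.intervalIntegrable_rpow' (a := 2*a) (b := 0)
      (by norm_num : (-1:ℝ) < -(1/2))).comp_sub_left a
    have h1 : a - 2*a = -a := by ring
    have h2 : a - 0 = a := by ring
    rwa [h1, h2] at this
  have hg2 : IntervalIntegrable (fun x => (x + a) ^ (-(1/2):ℝ)) MeasureTheory.volume (-a) a := by
    have := (intervalIntegral.intervalIntegrable_rpow' (a := 0) (b := 2*a)
      (by norm_num : (-1:ℝ) < -(1/2))).comp_add_right a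
    have h1 : (0:ℝ) - a = -a := by ring
    have h2 : 2*a - a = a := by ring
    rwa [h1, h2] at this
  have hg : IntervalIntegrable
      (fun x => C * ((a - x) ^ (-(1/2):ℝ) + (x + a) ^ (-(1/2):ℝ))) MeasureTheory.volume (-a) a :=
    (hg1.add hg2).const_mul C
  apply hg.mono_fun'
  · apply Measurable.aestronglyMeasurable
    unfold fK
    fun_prop
  · rw [Set.uIoc_of_le (by linarith : -a ≤ a)]
    filter_upwards [MeasureTheory.ae_restrict_mem measurableSet_Ioc] with x hx
    obtain ⟨hx1, hx2⟩ := hx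
    have hxsq : x^2 ≤ a^2 := by nlinarith
    have ht : (0:ℝ) < 1 - x^2 := by nlinarith
    have hax : (0:ℝ) < x + a := by linarith
    have hrw : ∀ y : ℝ, 0 ≤ y → y ^ (-(1/2):ℝ) = 1 / Real.sqrt y := by
      intro y hy
      rw [Real.rpow_neg hy, ← Real.sqrt_eq_rpow, one_div]
    have hfk_nonneg : 0 ≤ fK x a := by unfold fK; positivity
    rw [Real.norm_eq_abs, abs_of_nonneg hfk_nonneg]
    rcases eq_or_lt_of_le hx2 with rfl | hxa
    · have h0 : fK x x = 0 := by
        unfold fK; simp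
      rw [h0]
      apply mul_nonneg hCpos.le
      apply add_nonneg <;> apply Real.rpow_nonneg <;> linarith
    · have hamx : (0:ℝ) < a - x := by linarith
      rw [hrw _ hamx.le, hrw _ hax.le]
      have husplit : Real.sqrt (a^2 - x^2) = Real.sqrt (a - x) * Real.sqrt (x + a) := by
        rw [show a^2 - x^2 = (a-x)*(x+a) by ring, Real.sqrt_mul hamx.le]
      have key : fK x a ≤ C * (1 / Real.sqrt (a - x)) ∨ fK x a ≤ C * (1 / Real.sqrt (x + a)) := by
        unfold fK
        rw [husplit, hC]
        rcases le_total 0 x with hx0 | hx0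
        · left
          rw [div_mul_div_comm, mul_one, div_le_div_iff₀ (by positivity) (by positivity)]
          have h1 : Real.sqrt a ≤ Real.sqrt (x + a) := Real.sqrt_le_sqrt (by linarith)
          have h2 : 1 - a^2 ≤ 1 - x^2 := by nlinarith
          have h3 : (1 - a^2) * Real.sqrt a ≤ (1 - x^2) * Real.sqrt (x + a) :=
            mul_le_mul h2 h1 (Real.sqrt_nonneg a) (by linarith)
          have h4 : (0:ℝ) ≤ Real.sqrt (1-a^2) * Real.pi * Real.sqrt (a-x) := by positivity
          nlinarith [mul_le_mul_of_nonneg_left h3 h4]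
        · right
          rw [div_mul_div_comm, mul_one, div_le_div_iff₀ (by positivity) (by positivity)]
          have h1 : Real.sqrt a ≤ Real.sqrt (a - x) := Real.sqrt_le_sqrt (by linarith)
          have h2 : 1 - a^2 ≤ 1 - x^2 := by nlinarith
          have h3 : (1 - a^2) * Real.sqrt a ≤ (1 - x^2) * Real.sqrt (a - x) :=
            mul_le_mul h2 h1 (Real.sqrt_nonneg a) (by linarith)
          have h4 : (0:ℝ) ≤ Real.sqrt (1-a^2) * Real.pi * Real.sqrt (x + a) := by positivity
          nlinarith [mul_le_mul_of_nonneg_left h3 h4]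
      have hpos1 : (0:ℝ) ≤ 1 / Real.sqrt (a - x) := by positivity
      have hpos2 : (0:ℝ) ≤ 1 / Real.sqrt (x + a) := by positivity
      rcases key with h | h
      · calc fK x a ≤ C * (1 / Real.sqrt (a - x)) := h
          _ ≤ C * (1 / Real.sqrt (a - x) + 1 / Real.sqrt (x + a)) := by nlinarith
      · calc fK x a ≤ C * (1 / Real.sqrt (x + a)) := h
          _ ≤ C * (1 / Real.sqrt (a - x) + 1 / Real.sqrt (x + a)) := by nlinarith

theorem konno_density_integral_one (a : ℝ) (ha0 : 0 < a) (ha1 : a < 1) :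
    ∫ x in (-a)..a, fK x a = 1 := by
  have ha2 : (0:ℝ) < 1 - a^2 := by nlinarith
  have hpi := Real.pi_pos
  have hspos : 0 < Real.sqrt (1 - a^2) := Real.sqrt_pos.2 ha2
  set F : ℝ → ℝ := fun y =>
    Real.arcsin (Real.sqrt (1 - a^2) * y / (a * Real.sqrt (1 - y^2))) / Real.pi with hF
  have hcont : ContinuousOn F (Set.Icc (-a) a) := by
    apply ContinuousOn.div_const
    apply Real.continuous_arcsin.comp_continuousOn
    apply ContinuousOn.div
    · fun_prop
    · fun_prop
    · intro x hx
      have hx2 : x^2 ≤ a^2 := by nlinarith [hx.1, hx.2]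
      have : (0:ℝ) < 1 - x^2 := by nlinarith
      positivity
  have key := intervalIntegral.integral_eq_sub_of_hasDerivAt_of_le (by linarith : -a ≤ a)
    hcont (fun x hx => konno_deriv a x ha0 ha1 hx) (konno_integrable a ha0 ha1)
  rw [key, hF]
  have e1 : Real.sqrt (1 - a^2) * a / (a * Real.sqrt (1 - a^2)) = 1 := by
    field_simp
  have e2 : Real.sqrt (1 - a^2) * (-a) / (a * Real.sqrt (1 - (-a)^2)) = -1 := by
    rw [neg_pow]
    simp only [pow_two] at *
    field_simp
    rw [div_self (Real.sqrt_pos.2 (by nlinarith)).ne']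
  simp only [e1, e2, Real.arcsin_one, Real.arcsin_neg_one]
  field_simp
  ring
end

section
/- For 0 < a < 1, the integral ∫_0^a (4x^2/(1+x)) f_K(x;a) dx equals N(a) = (π a^2 - 2a sqrt(1-a^2) + 2(1-2a^2) arcsin(a)) / (π (1-a^2)). -/
noncomputable def N (a : ℝ) : ℝ :=
  (Real.pi * a^2 - 2*a*Real.sqrt (1 - a^2) + 2*(1 - 2*a^2) * Real.arcsin a) /
    (Real.pi * (1 - a^2))

set_option maxHeartbeats 1000000 in
theorem survival_normalization_integral (a : ℝ) (ha0 : 0 < a) (ha1 : a < 1) :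
    ∫ x in (0:ℝ)..a, (4*x^2/(1+x)) * fK x a = N a := by
  have hq0 : (0:ℝ) < 1 - a^2 := by nlinarith
  have hqpos : 0 < Real.sqrt (1 - a^2) := Real.sqrt_pos.2 hq0
  set q : ℝ := Real.sqrt (1 - a^2) with hqdef
  have hq2 : q^2 = 1 - a^2 := Real.sq_sqrt hq0.le
  have hπ : (0:ℝ) < Real.pi := Real.pi_pos
  set F : ℝ → ℝ := fun x =>
    ((2/(1-a^2) - 3) * Real.arcsin ((a^2+x)/(a*(1+x)))
      - Real.arcsin ((a^2-x)/(a*(1-x)))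
      + 2*Real.sqrt (a^2-x^2)/(q*(1+x))) / Real.pi with hF
  have hcont : ContinuousOn F (Set.Icc 0 a) := by
    apply ContinuousOn.div_const
    have c1 : ContinuousOn (fun x : ℝ => (a^2+x)/(a*(1+x))) (Set.Icc 0 a) := by
      apply ContinuousOn.div (by fun_prop) (by fun_prop)
      intro x hx
      have := hx.1
      positivity
    have c2 : ContinuousOn (fun x : ℝ => (a^2-x)/(a*(1-x))) (Set.Icc 0 a) := by
      apply ContinuousOn.div (by fun_prop) (by fun_prop)
      intro x hx
      have hxa : x ≤ a := hx.2
      have : 0 < 1 - x := by linarith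
      positivity
    have c3 : ContinuousOn (fun x : ℝ => 2*Real.sqrt (a^2-x^2)/(q*(1+x)))
        (Set.Icc 0 a) := by
      apply ContinuousOn.div (by fun_prop) (by fun_prop)
      intro x hx
      have := hx.1
      positivity
    exact (((Real.continuous_arcsin.comp_continuousOn c1).const_smul
      (2/(1-a^2) - 3)).sub (Real.continuous_arcsin.comp_continuousOn c2)).add c3
  have hderiv : ∀ x ∈ Set.Ioo (0:ℝ) a,
      HasDerivAt F ((4*x^2/(1+x)) * fK x a) x := by
    rintro x ⟨hx0, hxa⟩
    have hx1 : x < 1 := hxa.trans ha1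
    have h1p : (0:ℝ) < 1 + x := by linarith
    have h1m : (0:ℝ) < 1 - x := by linarith
    have hs0 : 0 < a^2 - x^2 := by nlinarith
    set S := Real.sqrt (a^2 - x^2) with hSdef
    have hSpos : 0 < S := Real.sqrt_pos.2 hs0
    have hS2 : S^2 = a^2 - x^2 := Real.sq_sqrt hs0.le
    -- derivative of inner function u
    have d_u : HasDerivAt (fun y : ℝ => (a^2+y)/(a*(1+y))) ((1-a^2)/(a*(1+x)^2)) x := by
      have hnum : HasDerivAt (fun y : ℝ => a^2+y) 1 x := by
        simpa using (hasDerivAt_id x).const_add (a^2)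
      have hden : HasDerivAt (fun y : ℝ => a*(1+y)) a x := by
        simpa using ((hasDerivAt_id x).const_add (1:ℝ)).const_mul a
      have := hnum.div hden (by positivity)
      refine this.congr_deriv (Eq.symm ?_)
      field_simp
      ring
    have hu1 : (a^2+x)/(a*(1+x)) < 1 := by
      rw [div_lt_one (by positivity)]
      nlinarith
    have hu0 : 0 < (a^2+x)/(a*(1+x)) := by positivity
    have hsu : Real.sqrt (1 - ((a^2+x)/(a*(1+x)))^2) = q * S / (a*(1+x)) := by
      rw [show (1:ℝ) - ((a^2+x)/(a*(1+x)))^2 = (q * S / (a*(1+x)))^2 by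
        conv_rhs => rw [div_pow, mul_pow, hq2, hS2]
        field_simp
        ring]
      exact Real.sqrt_sq (by positivity)
    have dA : HasDerivAt (fun y : ℝ => Real.arcsin ((a^2+y)/(a*(1+y))))
        (q/((1+x)*S)) x := by
      have := (Real.hasDerivAt_arcsin (by linarith : (a^2+x)/(a*(1+x)) ≠ -1)
        (ne_of_lt hu1)).comp x d_u
      refine this.congr_deriv (Eq.symm ?_)
      rw [hsu, show (1:ℝ)-a^2 = q^2 from hq2.symm]
      field_simp
    -- derivative of inner function v
    have d_v : HasDerivAt (fun y : ℝ => (a^2-y)/(a*(1-y))) ((a^2-1)/(a*(1-x)^2)) x := by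
      have hnum : HasDerivAt (fun y : ℝ => a^2-y) (-1) x := by
        simpa using (hasDerivAt_id x).const_sub (a^2)
      have hden : HasDerivAt (fun y : ℝ => a*(1-y)) (-a) x := by
        simpa using ((hasDerivAt_id x).const_sub (1:ℝ)).const_mul a
      have := hnum.div hden (by positivity)
      refine this.congr_deriv (Eq.symm ?_)
      field_simp
      ring
    have hv1 : (a^2-x)/(a*(1-x)) < 1 := by
      rw [div_lt_one (by positivity)]
      nlinarith
    have hvm : -1 < (a^2-x)/(a*(1-x)) := by
      rw [lt_div_iff₀ (by positivity)]
      nlinarith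
    have hsv : Real.sqrt (1 - ((a^2-x)/(a*(1-x)))^2) = q * S / (a*(1-x)) := by
      rw [show (1:ℝ) - ((a^2-x)/(a*(1-x)))^2 = (q * S / (a*(1-x)))^2 by
        conv_rhs => rw [div_pow, mul_pow, hq2, hS2]
        field_simp
        ring]
      exact Real.sqrt_sq (by positivity)
    have dB : HasDerivAt (fun y : ℝ => Real.arcsin ((a^2-y)/(a*(1-y))))
        (-(q/((1-x)*S))) x := by
      have := (Real.hasDerivAt_arcsin (ne_of_gt hvm) (ne_of_lt hv1)).comp x d_v
      refine this.congr_deriv (Eq.symm ?_)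
      rw [hsv, show (a:ℝ)^2-1 = -q^2 by rw [hq2]; ring]
      field_simp
    -- derivative of the sqrt quotient term
    have d_s : HasDerivAt (fun y : ℝ => Real.sqrt (a^2-y^2)) (-x / S) x := by
      have hinner : HasDerivAt (fun y : ℝ => a^2 - y^2) (-(2*x)) x := by
        have := (hasDerivAt_pow 2 x).const_sub (a^2)
        simpa using this
      have := (Real.hasDerivAt_sqrt (ne_of_gt hs0)).comp x hinner
      refine this.congr_deriv (Eq.symm ?_)
      rw [← hSdef]
      field_simp
    have dC : HasDerivAt (fun y : ℝ => 2*Real.sqrt (a^2-y^2)/(q*(1+y)))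
        (-2*(x + 1 - q^2)/(q*S*(1+x)^2)) x := by
      have hnum : HasDerivAt (fun y : ℝ => 2*Real.sqrt (a^2-y^2)) (2*(-x/S)) x :=
        d_s.const_mul 2
      have hden : HasDerivAt (fun y : ℝ => q*(1+y)) q x := by
        simpa using ((hasDerivAt_id x).const_add (1:ℝ)).const_mul q
      have := hnum.div hden (by positivity)
      have hval : (2*(-x/S)*(q*(1+x)) - 2*S*q)/(q*(1+x))^2
          = -2*(x + 1 - q^2)/(q*S*(1+x)^2) := by
        have hnum_eq : 2*(-x/S)*(q*(1+x)) - 2*S*q = -2*q*(x + 1 - q^2)/S := by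
          rw [hq2]
          field_simp
          linear_combination -hS2
        rw [hnum_eq]
        field_simp
      refine this.congr_deriv (Eq.symm ?_)
      rw [← hSdef]
      exact hval.symm
    have dtot := (((dA.const_mul ((2:ℝ)/(1-a^2) - 3)).sub dB).add dC).div_const Real.pi
    have hFd : HasDerivAt F
        (((2/(1-a^2) - 3) * (q/((1+x)*S)) - -(q/((1-x)*S))
          + -2*(x + 1 - q^2)/(q*S*(1+x)^2)) / Real.pi) x := dtot
    convert hFd using 1
    unfold fK
    rw [← hqdef, ← hSdef, show (1:ℝ)-a^2 = q^2 from hq2.symm]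
    have h1x2 : (0:ℝ) < 1 - x^2 := by nlinarith
    field_simp [h1x2.ne', hπ.ne', hqpos.ne', hSpos.ne', h1p.ne', h1m.ne']
    ring
  have hint : IntervalIntegrable (fun x => (4*x^2/(1+x)) * fK x a)
      MeasureTheory.volume 0 a := by
    have hbase : IntervalIntegrable (fun x : ℝ => x ^ (-(1/2) : ℝ))
        MeasureTheory.volume 0 a :=
      intervalIntegral.intervalIntegrable_rpow' (by norm_num)
    have hg : IntervalIntegrable
        (fun x : ℝ => (4*q/(Real.pi*(1-a^2)*Real.sqrt a)) * (a - x) ^ (-(1/2) : ℝ))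
        MeasureTheory.volume 0 a := by
      have := ((hbase.comp_sub_left a).const_mul (4*q/(Real.pi*(1-a^2)*Real.sqrt a))).symm
      simpa using this
    apply hg.mono_fun
    · apply Measurable.aestronglyMeasurable
      unfold fK
      fun_prop
    · rw [Set.uIoc_of_le ha0.le]
      filter_upwards [MeasureTheory.ae_restrict_mem measurableSet_Ioc] with x hx
      have hx0 : 0 < x := hx.1
      have hxa : x ≤ a := hx.2
      have hax : 0 ≤ a - x := by linarith
      have hx1 : x < 1 := lt_of_le_of_lt hxa ha1
      have h1p : (0:ℝ) < 1 + x := by linarith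
      have hrpow : (a - x) ^ (-(1/2) : ℝ) = 1 / Real.sqrt (a - x) := by
        rw [Real.rpow_neg hax, Real.sqrt_eq_rpow]
        exact (one_div _).symm
      have hCpos : (0:ℝ) ≤ 4*q/(Real.pi*(1-a^2)*Real.sqrt a) := by positivity
      rw [Real.norm_eq_abs, Real.norm_eq_abs, abs_of_nonneg (by positivity : (0:ℝ) ≤
        (4*q/(Real.pi*(1-a^2)*Real.sqrt a)) * (a - x) ^ (-(1/2) : ℝ))]
      rcases eq_or_lt_of_le hxa with heq | hlt
      · have h0 : Real.sqrt (a^2 - x^2) = 0 := by rw [heq]; simp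
        unfold fK
        rw [h0, mul_zero, div_zero, mul_zero, abs_zero]
        exact mul_nonneg hCpos (Real.rpow_nonneg hax _)
      · have hs0 : 0 < a^2 - x^2 := by nlinarith
        have hspos : 0 < Real.sqrt (a^2 - x^2) := Real.sqrt_pos.2 hs0
        have hfx : (0:ℝ) ≤ (4*x^2/(1+x)) * fK x a := by
          unfold fK
          have h1x2 : 0 < 1 - x^2 := by nlinarith
          positivity
        rw [abs_of_nonneg hfx, hrpow]
        unfold fK
        have h1x2 : 0 < 1 - x^2 := by nlinarith
        have hdecomp : Real.sqrt (a^2 - x^2)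
            = Real.sqrt (a + x) * Real.sqrt (a - x) := by
          rw [← Real.sqrt_mul (by linarith)]
          ring_nf
        have hsa : Real.sqrt a ≤ Real.sqrt (a + x) := Real.sqrt_le_sqrt (by linarith)
        have hsax : 0 < Real.sqrt (a - x) := Real.sqrt_pos.2 (by linarith)
        have hsaa : 0 < Real.sqrt a := Real.sqrt_pos.2 ha0
        calc (4*x^2/(1+x)) * (q / (Real.pi * (1 - x^2) * Real.sqrt (a^2 - x^2)))
            = (4*x^2*q) / ((1+x) * (Real.pi * (1 - x^2) * Real.sqrt (a^2 - x^2))) := by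
              rw [div_mul_div_comm]
          _ ≤ (4*q) / (Real.pi*(1-a^2)*Real.sqrt a * Real.sqrt (a - x)) := by
              apply div_le_div₀ (by positivity)
              · nlinarith [mul_pos (mul_pos (show (0:ℝ)<1-x by linarith) h1p) hqpos]
              · positivity
              · rw [hdecomp]
                have e1 : Real.pi*(1-a^2) ≤ (1+x) * (Real.pi * (1 - x^2)) := by
                  nlinarith [mul_le_mul_of_nonneg_left
                    (show (1-a^2) ≤ (1+x)*(1-x^2) by nlinarith) hπ.le]
                have e2 : Real.sqrt a * Real.sqrt (a - x)
                    ≤ Real.sqrt (a + x) * Real.sqrt (a - x) :=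
                  mul_le_mul_of_nonneg_right hsa hsax.le
                calc Real.pi*(1-a^2)*Real.sqrt a * Real.sqrt (a - x)
                    = Real.pi*(1-a^2)*(Real.sqrt a * Real.sqrt (a - x)) := by ring
                  _
                    ≤ Real.pi*(1-a^2)*(Real.sqrt (a + x) * Real.sqrt (a - x)) := by
                      apply mul_le_mul_of_nonneg_left e2 (by positivity)
                  _ ≤ (1+x) * (Real.pi * (1 - x^2))*(Real.sqrt (a + x) * Real.sqrt (a - x)) := by
                      apply mul_le_mul_of_nonneg_right e1 (by positivity)
                  _ = (1+x) * (Real.pi * (1 - x^2) * (Real.sqrt (a + x) * Real.sqrt (a - x))) := by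
                      ring
          _ = (4*q/(Real.pi*(1-a^2)*Real.sqrt a)) * (1 / Real.sqrt (a - x)) := by
              rw [div_mul_div_comm, mul_one]
  rw [intervalIntegral.integral_eq_sub_of_hasDerivAt_of_le ha0.le hcont hderiv hint]
  -- compute F a - F 0
  have h1 : (a^2+a)/(a*(1+a)) = 1 := by field_simp; ring
  have h2 : (a^2-a)/(a*(1-a)) = -1 := by
    rw [div_eq_iff (by nlinarith)]; ring
  have h3 : (a^2+0)/(a*(1+0)) = a := by field_simp; ring
  have h4 : (a^2-0)/(a*(1-0)) = a := by field_simp; ring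
  have h5 : Real.sqrt (a^2 - a^2) = 0 := by simp
  have h6 : Real.sqrt (a^2 - 0^2) = a := by
    simpa using Real.sqrt_sq ha0.le
  simp only [hF, h1, h2, h3, h4, h5, h6, Real.arcsin_one, Real.arcsin_neg_one, N, ← hqdef]
  have ha2q : a^2 = 1 - q^2 := by rw [hq2]; ring
  have hqne : q ≠ 0 := ne_of_gt hqpos
  have hπne : Real.pi ≠ 0 := ne_of_gt hπ
  rw [ha2q]
  ring_nf
  field_simp
  ring
end

section
/- For 0 < a < 1, the quantity N(a) = (π a^2 - 2a sqrt(1-a^2) + 2(1-2a^2) arcsin(a)) / (π (1-a^2)) satisfies 0 < N(a) < 1. -/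
open Real

noncomputable def fN (a : ℝ) : ℝ :=
  Real.pi * a^2 - 2*a*Real.sqrt (1 - a^2) + 2*(1 - 2*a^2) * Real.arcsin a

lemma fN_hasDeriv {a : ℝ} (h1 : -1 < a) (h2 : a < 1) :
    HasDerivAt fN (2*a*(Real.pi - 4*Real.arcsin a)) a := by
  have hpos : 0 < 1 - a^2 := by nlinarith
  have hne : (1 : ℝ) - a^2 ≠ 0 := ne_of_gt hpos
  have hsne : Real.sqrt (1 - a^2) ≠ 0 := by positivity
  have hsq : HasDerivAt (fun a : ℝ => 1 - a^2) (-(2*a)) a := by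
    simpa using (hasDerivAt_pow 2 a).const_sub 1
  have hsqrt : HasDerivAt (fun a : ℝ => Real.sqrt (1 - a^2))
      (1 / (2 * Real.sqrt (1 - a^2)) * (-(2*a))) a :=
    (Real.hasDerivAt_sqrt hne).comp a hsq
  have ha : HasDerivAt Real.arcsin (1 / Real.sqrt (1 - a^2)) a :=
    Real.hasDerivAt_arcsin (by linarith) (by linarith)
  have hA : HasDerivAt (fun a : ℝ => Real.pi * a^2) (Real.pi * (2*a)) a := by
    simpa using (hasDerivAt_pow 2 a).const_mul Real.pi
  have hB : HasDerivAt (fun a : ℝ => 2*a*Real.sqrt (1 - a^2))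
      (2 * Real.sqrt (1 - a^2) + (2*a) * (1 / (2 * Real.sqrt (1 - a^2)) * (-(2*a)))) a := by
    have h2a : HasDerivAt (fun a : ℝ => 2*a) 2 a := by
      simpa using (hasDerivAt_id a).const_mul 2
    exact h2a.mul hsqrt
  have hC : HasDerivAt (fun a : ℝ => 2*(1 - 2*a^2) * Real.arcsin a)
      ((2 * -(2*(2*a))) * Real.arcsin a + 2*(1 - 2*a^2) * (1 / Real.sqrt (1 - a^2))) a := by
    have hc : HasDerivAt (fun a : ℝ => 2*(1 - 2*a^2)) (2 * -(2*(2*a))) a := by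
      have : HasDerivAt (fun a : ℝ => 1 - 2*a^2) (-(2*(2*a))) a := by
        simpa using ((hasDerivAt_pow 2 a).const_mul 2).const_sub 1
      simpa [mul_comm, mul_assoc, mul_left_comm] using this.const_mul 2
    exact hc.mul ha
  have := (hA.sub hB).add hC
  apply this.congr_deriv
  have hss : Real.sqrt (1 - a^2) * Real.sqrt (1 - a^2) = 1 - a^2 :=
    Real.mul_self_sqrt (le_of_lt hpos)
  field_simp
  nlinarith [hss, Real.sqrt_nonneg (1 - a^2)]

lemma fN_cont : Continuous fN := by
  unfold fN
  exact ((continuous_const.mul (continuous_pow 2)).sub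
    ((continuous_const.mul continuous_id).mul (Real.continuous_sqrt.comp (by fun_prop)))).add
    ((continuous_const.mul (by fun_prop)).mul Real.continuous_arcsin)

lemma fN_zero : fN 0 = 0 := by simp [fN]

lemma fN_one : fN 1 = 0 := by
  simp [fN, Real.arcsin_one]; ring

lemma arcsin_sqrt_two : Real.arcsin (Real.sqrt 2 / 2) = Real.pi / 4 := by
  rw [← Real.sin_pi_div_four, Real.arcsin_sin] <;> linarith [Real.pi_pos]

lemma fN_pos {a : ℝ} (h0 : 0 < a) (h1 : a < 1) : 0 < fN a := by
  have hs2 : Real.sqrt 2 / 2 < 1 := by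
    nlinarith [Real.sq_sqrt (by norm_num : (2:ℝ) ≥ 0), Real.sqrt_nonneg 2,
      Real.sqrt_pos.mpr (by norm_num : (0:ℝ) < 2)]
  have hs2' : (0:ℝ) < Real.sqrt 2 / 2 := by positivity
  have hmono : StrictMonoOn fN (Set.Icc 0 (Real.sqrt 2 / 2)) := by
    apply strictMonoOn_of_deriv_pos (convex_Icc _ _) fN_cont.continuousOn
    intro x hx
    rw [interior_Icc] at hx
    obtain ⟨hxa, hxb⟩ := hx
    have hxlt1 : x < 1 := lt_trans hxb hs2
    rw [(fN_hasDeriv (by linarith) hxlt1).deriv]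
    have hx1 : Real.arcsin x < Real.pi / 4 := by
      rw [← arcsin_sqrt_two]

      exact Real.strictMonoOn_arcsin ⟨by linarith, by linarith⟩
        ⟨by linarith, by linarith⟩ hxb
    nlinarith
  have hanti : StrictAntiOn fN (Set.Icc (Real.sqrt 2 / 2) 1) := by
    apply strictAntiOn_of_deriv_neg (convex_Icc _ _) fN_cont.continuousOn
    intro x hx
    rw [interior_Icc] at hx
    obtain ⟨hxa, hxb⟩ := hx
    rw [(fN_hasDeriv (by linarith) hxb).deriv]
    have hx1 : Real.pi / 4 < Real.arcsin x := by
      rw [← arcsin_sqrt_two]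
      exact Real.strictMonoOn_arcsin ⟨by linarith, by linarith⟩
        ⟨by linarith, le_of_lt hxb⟩ hxa
    have : (0:ℝ) < x := by linarith
    nlinarith
  rcases le_or_gt a (Real.sqrt 2 / 2) with h | h
  · have := hmono (Set.mem_Icc.mpr ⟨le_refl 0, by linarith⟩)
      (Set.mem_Icc.mpr ⟨le_of_lt h0, h⟩) h0
    rwa [fN_zero] at this
  · have := hanti (Set.mem_Icc.mpr ⟨le_of_lt h, le_of_lt h1⟩)
      (Set.mem_Icc.mpr ⟨le_of_lt hs2, le_refl 1⟩) h1
    rwa [fN_one] at this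

lemma fN_lt {a : ℝ} (h0 : 0 < a) (h1 : a < 1) : fN a < Real.pi * (1 - a^2) := by
  set g : ℝ → ℝ := fun a => Real.pi * (1 - a^2) - fN a with hg
  have hganti : StrictAntiOn g (Set.Icc 0 1) := by
    apply strictAntiOn_of_deriv_neg (convex_Icc _ _)
    · exact (continuous_const.mul (by fun_prop)).sub fN_cont |>.continuousOn
    · intro x hx
      rw [interior_Icc] at hx
      have hd : HasDerivAt g (Real.pi * (-(2*x)) - 2*x*(Real.pi - 4*Real.arcsin x)) x := by
        have h1 : HasDerivAt (fun a : ℝ => Real.pi * (1 - a^2)) (Real.pi * (-(2*x))) x := by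
          have : HasDerivAt (fun a : ℝ => 1 - a^2) (-(2*x)) x := by
            simpa using (hasDerivAt_pow 2 x).const_sub 1
          exact this.const_mul Real.pi
        exact h1.sub (fN_hasDeriv (by linarith [hx.1]) hx.2)
      rw [hd.deriv]
      have harc : Real.arcsin x < Real.pi / 2 := by
        have := Real.arcsin_lt_pi_div_two (x := x)
        rw [this]; exact hx.2
      have := hx.1
      nlinarith
  have := hganti (Set.mem_Icc.mpr ⟨le_of_lt h0, le_of_lt h1⟩)
    (Set.mem_Icc.mpr ⟨zero_le_one, le_refl 1⟩) h1
  have hg1 : g 1 = 0 := by simp [hg, fN_one]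
  rw [hg1] at this
  simp only [hg] at this
  linarith

theorem N_mem_Ioo (a : ℝ) (ha0 : 0 < a) (ha1 : a < 1) :
    0 < N a ∧ N a < 1 := by
  have hden : 0 < Real.pi * (1 - a^2) := by
    have : 0 < 1 - a^2 := by nlinarith
    positivity
  have hN : N a = fN a / (Real.pi * (1 - a^2)) := rfl
  constructor
  · rw [hN]; exact div_pos (fN_pos ha0 ha1) hden
  · rw [hN, div_lt_one hden]; exact fN_lt ha0 ha1
end
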